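/- arXiv:1511.04978 — 7 statements merged into one kernel-verified Lean document; each statement's English description precedes it below -/
import Mathlib

section
/- Let B = ⟨a, b ∣ a b a⁻¹ b = 1⟩ be the Klein bottle group. Then the map ℤ × ℤ → B sending (i, j) to aⁱ bʲ is a bijection; that is, every element of B can be written uniquely in the form aⁱ bʲ with i, j ∈ ℤ. -/
/-- The single relator `a * b * a⁻¹ * b` of the Klein bottle group,
where `a = FreeGroup.of 0` and `b = FreeGroup.of 1`. -/
def kleinBottleRels : Set (FreeGroup (Fin 2)) :=
  {FreeGroup.of 0 * FreeGroup.of 1 * (FreeGroup.of 0)⁻¹ * FreeGroup.of 1}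

/-- The Klein bottle group `B = ⟨a, b ∣ a b a⁻¹ b = 1⟩`. -/
abbrev KleinBottleGroup : Type := PresentedGroup kleinBottleRels

/-- The generator `a` of the Klein bottle group. -/
def kleinA : KleinBottleGroup := PresentedGroup.of 0

/-- The generator `b` of the Klein bottle group. -/
def kleinB : KleinBottleGroup := PresentedGroup.of 1

/-! Auxiliary: a concrete permutation model -/

def permA : Equiv.Perm (ℤ × ℤ) where
  toFun p := (p.1 + 1, -p.2)
  invFun p := (p.1 - 1, -p.2)
  left_inv p := by simp
  right_inv p := by simp

def permB : Equiv.Perm (ℤ × ℤ) where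
  toFun p := (p.1, p.2 + 1)
  invFun p := (p.1, p.2 - 1)
  left_inv p := by simp
  right_inv p := by simp

def kleinF : Fin 2 → Equiv.Perm (ℤ × ℤ) := ![permA, permB]

lemma kleinF_rels : ∀ r ∈ kleinBottleRels, FreeGroup.lift kleinF r = 1 := by
  intro r hr
  rw [kleinBottleRels, Set.mem_singleton_iff] at hr
  subst hr
  simp only [map_mul, map_inv, FreeGroup.lift_apply_of]
  ext p <;>
    simp [kleinF, permA, permB, Equiv.Perm.mul_apply, Equiv.Perm.inv_def,
      Equiv.symm, Equiv.Perm.one_apply]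

def toPerm : KleinBottleGroup →* Equiv.Perm (ℤ × ℤ) := PresentedGroup.toGroup kleinF_rels

lemma toPerm_A : toPerm kleinA = permA := PresentedGroup.toGroup.of kleinF_rels
lemma toPerm_B : toPerm kleinB = permB := PresentedGroup.toGroup.of kleinF_rels

lemma units_neg_one_zpow_neg (k : ℤ) : (-1 : ℤˣ) ^ (-k) = (-1 : ℤˣ) ^ k := by
  rw [zpow_neg]
  rcases Int.units_eq_one_or ((-1 : ℤˣ) ^ k) with h | h <;> rw [h] <;> decide

lemma units_neg_one_zpow_add_one (k : ℤ) :
    ((-1 : ℤˣ) ^ (k + 1) : ℤˣ) = -((-1 : ℤˣ) ^ k) := by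
  rw [zpow_add_one, mul_neg_one]

lemma units_neg_one_zpow_sub_one (k : ℤ) :
    ((-1 : ℤˣ) ^ (k - 1) : ℤˣ) = -((-1 : ℤˣ) ^ k) := by
  rw [zpow_sub_one, inv_neg, inv_one, mul_neg_one]

lemma permA_zpow (i : ℤ) : ∀ p : ℤ × ℤ,
    (permA ^ i) p = (p.1 + i, ((-1 : ℤˣ) ^ i : ℤˣ) * p.2) := by
  induction i using Int.induction_on with
  | zero => simp
  | succ k ih =>
      intro p
      rw [zpow_add_one, Equiv.Perm.mul_apply, ih, units_neg_one_zpow_add_one]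
      simp only [permA, Equiv.coe_fn_mk, Units.val_neg]
      simp only [Prod.mk.injEq]; constructor <;> push_cast <;> ring
  | pred k ih =>
      intro p
      rw [zpow_sub_one, Equiv.Perm.mul_apply, ih, units_neg_one_zpow_sub_one]
      simp only [permA, Equiv.Perm.inv_def, Equiv.symm, Equiv.coe_fn_mk, Units.val_neg]
      simp only [Prod.mk.injEq]; constructor <;> push_cast <;> ring

lemma permB_zpow (j : ℤ) : ∀ p : ℤ × ℤ, (permB ^ j) p = (p.1, p.2 + j) := by
  induction j using Int.induction_on with
  | zero => simp
  | succ k ih =>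
      intro p
      rw [zpow_add_one, Equiv.Perm.mul_apply, ih]
      simp only [permB, Equiv.coe_fn_mk]
      simp only [Prod.mk.injEq]; constructor <;> push_cast <;> ring
  | pred k ih =>
      intro p
      rw [zpow_sub_one, Equiv.Perm.mul_apply, ih]
      simp only [permB, Equiv.Perm.inv_def, Equiv.symm, Equiv.coe_fn_mk]
      simp only [Prod.mk.injEq]; constructor <;> push_cast <;> ring

/-! Relations in the Klein bottle group -/

lemma klein_rel : kleinA * kleinB * kleinA⁻¹ * kleinB = 1 := by
  have h : PresentedGroup.mk kleinBottleRels
      (FreeGroup.of 0 * FreeGroup.of 1 * (FreeGroup.of 0)⁻¹ * FreeGroup.of 1) = 1 :=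
    (QuotientGroup.eq_one_iff _).mpr (Subgroup.subset_normalClosure rfl)
  simpa only [map_mul, map_inv, kleinA, kleinB, PresentedGroup.of] using h

lemma klein_conj : kleinA * kleinB * kleinA⁻¹ = kleinB⁻¹ :=
  eq_inv_of_mul_eq_one_left klein_rel

lemma klein_conj_zpow (j : ℤ) : kleinA * kleinB ^ j * kleinA⁻¹ = kleinB ^ (-j) := by
  rw [← conj_zpow, klein_conj, inv_zpow, zpow_neg]

lemma klein_conj_zpow' (j : ℤ) : kleinA⁻¹ * kleinB ^ j * kleinA = kleinB ^ (-j) := by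
  have := klein_conj_zpow (-j)
  rw [neg_neg] at this
  rw [← this]
  group

lemma klein_conj_zpow_all (k j : ℤ) :
    kleinA ^ k * kleinB ^ j * (kleinA ^ k)⁻¹ = kleinB ^ (((-1 : ℤˣ) ^ k : ℤˣ) * j) := by
  induction k using Int.induction_on with
  | zero => simp
  | succ k ih =>
      have hA : kleinA ^ ((k : ℤ) + 1) = kleinA * kleinA ^ (k : ℤ) := by
        rw [zpow_add_one]; group
      rw [hA, mul_inv_rev]
      calc kleinA * kleinA ^ (k:ℤ) * kleinB ^ j * ((kleinA ^ (k:ℤ))⁻¹ * kleinA⁻¹)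
          = kleinA * (kleinA ^ (k:ℤ) * kleinB ^ j * (kleinA ^ (k:ℤ))⁻¹) * kleinA⁻¹ := by group
        _ = kleinA * kleinB ^ (((-1 : ℤˣ) ^ (k:ℤ) : ℤˣ) * j) * kleinA⁻¹ := by rw [ih]
        _ = kleinB ^ (-(((-1 : ℤˣ) ^ (k:ℤ) : ℤˣ) * j)) := klein_conj_zpow _
        _ = kleinB ^ (((-1 : ℤˣ) ^ ((k:ℤ)+1) : ℤˣ) * j) := by
            congr 1
            rw [units_neg_one_zpow_add_one, Units.val_neg]
            ring
  | pred k ih =>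
      have hA : kleinA ^ (-(k : ℤ) - 1) = kleinA⁻¹ * kleinA ^ (-(k : ℤ)) := by
        rw [zpow_sub_one]; group
      rw [hA, mul_inv_rev]
      calc kleinA⁻¹ * kleinA ^ (-(k:ℤ)) * kleinB ^ j * ((kleinA ^ (-(k:ℤ)))⁻¹ * kleinA⁻¹⁻¹)
          = kleinA⁻¹ * (kleinA ^ (-(k:ℤ)) * kleinB ^ j * (kleinA ^ (-(k:ℤ)))⁻¹) * kleinA := by group
        _ = kleinA⁻¹ * kleinB ^ (((-1 : ℤˣ) ^ (-(k:ℤ)) : ℤˣ) * j) * kleinA := by rw [ih]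
        _ = kleinB ^ (-(((-1 : ℤˣ) ^ (-(k:ℤ)) : ℤˣ) * j)) := klein_conj_zpow' _
        _ = kleinB ^ (((-1 : ℤˣ) ^ (-(k:ℤ)-1) : ℤˣ) * j) := by
            congr 1
            rw [units_neg_one_zpow_sub_one, Units.val_neg]
            ring

lemma klein_comm (j k : ℤ) :
    kleinB ^ j * kleinA ^ k = kleinA ^ k * kleinB ^ (((-1 : ℤˣ) ^ k : ℤˣ) * j) := by
  have h := klein_conj_zpow_all k (((-1 : ℤˣ) ^ k : ℤˣ) * j)
  have hval : (((-1 : ℤˣ) ^ k : ℤˣ) : ℤ) * (((-1 : ℤˣ) ^ k : ℤˣ) * j) = j := by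
    rcases Int.units_eq_one_or ((-1 : ℤˣ) ^ k) with hu | hu <;> rw [hu] <;> simp
  rw [hval] at h
  rw [← h]
  group

/-- Every element of the Klein bottle group can be written uniquely as `a ^ i * b ^ j`
with `i, j : ℤ`. -/
theorem kleinBottle_normal_form :
    Function.Bijective (fun p : ℤ × ℤ => kleinA ^ p.1 * kleinB ^ p.2) := by
  constructor
  · -- injective
    rintro ⟨i, j⟩ ⟨k, l⟩ h
    simp only at h
    have h2 : toPerm (kleinA ^ i * kleinB ^ j) ((0 : ℤ), (0 : ℤ))
        = toPerm (kleinA ^ k * kleinB ^ l) ((0 : ℤ), (0 : ℤ)) := by rw [h]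
    simp only [map_mul, map_zpow, toPerm_A, toPerm_B, Equiv.Perm.mul_apply,
      permB_zpow, permA_zpow, zero_add] at h2
    rw [Prod.mk.injEq] at h2
    obtain ⟨h3, h4⟩ := h2
    subst h3
    have h5 : j = l := by
      have hu : (((-1 : ℤˣ) ^ i : ℤˣ) : ℤ) ≠ 0 := Units.ne_zero _
      exact mul_left_cancel₀ hu h4
    simp [h5]
  · -- surjective
    intro x
    let S : Subgroup KleinBottleGroup :=
      { carrier := {y | ∃ p : ℤ × ℤ, kleinA ^ p.1 * kleinB ^ p.2 = y}
        one_mem' := ⟨(0, 0), by simp⟩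
        mul_mem' := by
          rintro _ _ ⟨⟨i, j⟩, rfl⟩ ⟨⟨k, l⟩, rfl⟩
          refine ⟨(i + k, ((-1 : ℤˣ) ^ k : ℤˣ) * j + l), ?_⟩
          simp only
          rw [zpow_add, zpow_add]
          calc kleinA ^ i * kleinA ^ k * (kleinB ^ ((((-1 : ℤˣ) ^ k : ℤˣ) : ℤ) * j) * kleinB ^ l)
              = kleinA ^ i * (kleinA ^ k * kleinB ^ ((((-1 : ℤˣ) ^ k : ℤˣ) : ℤ) * j)) * kleinB ^ l := by
                group
            _ = kleinA ^ i * (kleinB ^ j * kleinA ^ k) * kleinB ^ l := by rw [← klein_comm]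
            _ = kleinA ^ i * kleinB ^ j * (kleinA ^ k * kleinB ^ l) := by group
        inv_mem' := by
          rintro _ ⟨⟨i, j⟩, rfl⟩
          refine ⟨(-i, ((-1 : ℤˣ) ^ (-i) : ℤˣ) * (-j)), ?_⟩
          simp only
          rw [← klein_comm]
          group }
    obtain ⟨p, hp⟩ := PresentedGroup.generated_by kleinBottleRels S
      (by
        intro n
        fin_cases n
        · exact ⟨(1, 0), by simp [kleinA]⟩
        · exact ⟨(0, 1), by simp [kleinB]⟩) x
    exact ⟨p, hp⟩
end

section
/- Let B = ⟨a, b ∣ a b a⁻¹ b = 1⟩ be the Klein bottle group. Then every automorphism φ of B satisfies φ(b) = b or φ(b) = b⁻¹. -/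
/-- Concrete model of the Klein bottle group: `ℤ ⋊ ℤ`. -/
structure Kl where
  m : ℤ
  n : ℤ

namespace Kl

/-- sign `(-1)^p` as an integer -/
def e (p : ℤ) : ℤ := (Int.negOnePow p : ℤ)

@[simp] lemma e_zero : e 0 = 1 := rfl
lemma e_add (p q : ℤ) : e (p + q) = e p * e q := by
  simp [e, Int.negOnePow_add]
lemma e_mul_self (p : ℤ) : e p * e p = 1 := by
  simp [e, ← Units.val_mul, Int.units_mul_self]
lemma e_neg (p : ℤ) : e (-p) = e p := by simp [e, Int.negOnePow_neg]
@[simp] lemma e_one : e 1 = -1 := rfl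
lemma e_add_one (p : ℤ) : e (p + 1) = -e p := by rw [e_add, e_one]; ring

protected def mul (x y : Kl) : Kl := ⟨x.m + y.m, e y.m * x.n + y.n⟩
protected def inv (x : Kl) : Kl := ⟨-x.m, -(e x.m * x.n)⟩

instance : Group Kl :=
  { mul := Kl.mul
    one := ⟨0, 0⟩
    inv := Kl.inv
    mul_assoc := by
      rintro ⟨m, n⟩ ⟨p, q⟩ ⟨r, s⟩
      show Kl.mul (Kl.mul _ _) _ = Kl.mul _ (Kl.mul _ _)
      simp only [Kl.mul, Kl.mk.injEq, e_add]
      constructor <;> ring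
    one_mul := by
      rintro ⟨m, n⟩
      show Kl.mul ⟨0,0⟩ _ = _
      simp [Kl.mul]
    mul_one := by
      rintro ⟨m, n⟩
      show Kl.mul _ ⟨0,0⟩ = _
      simp [Kl.mul]
    inv_mul_cancel := by
      rintro ⟨m, n⟩
      show Kl.mul (Kl.inv _) _ = ⟨0, 0⟩
      simp only [Kl.mul, Kl.inv, Kl.mk.injEq]
      constructor
      · ring
      · linear_combination (-n : ℤ) * e_mul_self m }

@[simp] lemma mul_def (x y : Kl) : x * y = ⟨x.m + y.m, e y.m * x.n + y.n⟩ := rfl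
@[simp] lemma one_def : (1 : Kl) = ⟨0, 0⟩ := rfl
@[simp] lemma inv_def (x : Kl) : x⁻¹ = ⟨-x.m, -(e x.m * x.n)⟩ := rfl

lemma bn_pow (nn k : ℤ) : (⟨0, nn⟩ : Kl) ^ k = ⟨0, nn * k⟩ := by
  induction k using Int.induction_on with
  | zero => simp
  | succ p ih => rw [zpow_add_one, ih]; simp; ring
  | pred p ih => rw [zpow_sub_one, ih]; simp; ring

@[simp] lemma bpow (k : ℤ) : (⟨0, 1⟩ : Kl) ^ k = ⟨0, k⟩ := by
  simpa using bn_pow 1 k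

lemma apow (k : ℤ) : (⟨1, 0⟩ : Kl) ^ k = ⟨k, 0⟩ := by
  induction k using Int.induction_on with
  | zero => simp
  | succ p ih => rw [zpow_add_one, ih]; simp
  | pred p ih =>
    rw [zpow_sub_one, ih]
    simp only [inv_def, mul_def, e_zero, mk.injEq]
    constructor
    · omega
    · ring

/-- An element has first coordinate 0 iff it is conjugate to its inverse. -/
lemma m_eq_zero_iff (x : Kl) : x.m = 0 ↔ ∃ c : Kl, c * x * c⁻¹ = x⁻¹ := by
  constructor
  · rintro h
    obtain ⟨m, n⟩ := x
    simp only at h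
    subst h
    exact ⟨⟨1, 0⟩, by simp [e_neg]⟩
  · rintro ⟨c, hc⟩
    have h1 : (c * x * c⁻¹).m = x.m := by simp
    have h2 : (x⁻¹).m = -x.m := by simp
    rw [hc, h2] at h1
    omega

end Kl

namespace KB

/-- generator images in the concrete model -/
def f0 : Fin 2 → Kl := ![⟨1, 0⟩, ⟨0, 1⟩]

lemma rels_check : ∀ r ∈ kleinBottleRels, FreeGroup.lift f0 r = 1 := by
  rintro r hr
  rw [kleinBottleRels, Set.mem_singleton_iff] at hr
  subst hr
  simp [f0, Kl.e_neg]

/-- The homomorphism from the presented group to the concrete model. -/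
def toKl : KleinBottleGroup →* Kl := PresentedGroup.toGroup rels_check

@[simp] lemma toKl_a : toKl kleinA = ⟨1, 0⟩ := by
  simp [toKl, kleinA, f0]

@[simp] lemma toKl_b : toKl kleinB = ⟨0, 1⟩ := by
  simp [toKl, kleinB, f0]

lemma rel1 : kleinA * kleinB * kleinA⁻¹ * kleinB = 1 := by
  have h : (PresentedGroup.mk kleinBottleRels)
      (FreeGroup.of 0 * FreeGroup.of 1 * (FreeGroup.of 0)⁻¹ * FreeGroup.of 1) = 1 := by
    apply (QuotientGroup.eq_one_iff _).mpr
    exact Subgroup.subset_normalClosure rfl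
  simpa [kleinA, kleinB, PresentedGroup.of, map_mul, map_inv] using h

lemma conj_b : kleinA * kleinB * kleinA⁻¹ = kleinB⁻¹ := by
  calc kleinA * kleinB * kleinA⁻¹
      = (kleinA * kleinB * kleinA⁻¹ * kleinB) * kleinB⁻¹ := by group
    _ = kleinB⁻¹ := by rw [rel1]; group

lemma conj_bz (nn : ℤ) : kleinA * kleinB ^ nn * kleinA⁻¹ = kleinB ^ (-nn) := by
  calc kleinA * kleinB ^ nn * kleinA⁻¹ = (kleinA * kleinB * kleinA⁻¹) ^ nn := by
        rw [conj_zpow]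
    _ = (kleinB⁻¹) ^ nn := by rw [conj_b]
    _ = kleinB ^ (-nn) := by group

lemma conj_apow (p : ℤ) : ∀ nn : ℤ,
    kleinA ^ p * kleinB ^ nn * kleinA ^ (-p) = kleinB ^ (Kl.e p * nn) := by
  induction p using Int.induction_on with
  | zero => intro nn; simp
  | succ p ih =>
    intro nn
    have h1 : kleinA ^ ((p : ℤ) + 1) * kleinB ^ nn * kleinA ^ (-((p : ℤ) + 1))
        = kleinA ^ (p : ℤ) * (kleinA * kleinB ^ nn * kleinA⁻¹) * kleinA ^ (-(p : ℤ)) := by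
      group
    rw [h1, conj_bz, ih, Kl.e_add_one]
    ring_nf
  | pred p ih =>
    intro nn
    have h1 : kleinA ^ (-(p : ℤ) - 1) * kleinB ^ nn * kleinA ^ (-(-(p : ℤ) - 1))
        = kleinA ^ (-(p : ℤ)) * (kleinA⁻¹ * kleinB ^ nn * kleinA) * kleinA ^ (-(-(p : ℤ))) := by
      group
    have h2 : kleinA⁻¹ * kleinB ^ nn * kleinA = kleinB ^ (-nn) := by
      have := conj_bz (-nn)
      rw [neg_neg] at this
      rw [← this]
      group
    rw [h1, h2, ih]
    have h3 : Kl.e (-(p : ℤ) - 1) = -Kl.e (-(p : ℤ)) := by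
      rw [show (-(p : ℤ) - 1) = -(p : ℤ) + -1 by ring, Kl.e_add, show Kl.e (-1) = -1 from by
        rw [← Kl.e_neg]; simp]
      ring
    rw [h3]
    ring_nf

lemma key (p nn : ℤ) : kleinB ^ nn * kleinA ^ p = kleinA ^ p * kleinB ^ (Kl.e p * nn) := by
  have h := conj_apow (-p) nn
  rw [neg_neg, Kl.e_neg] at h
  calc kleinB ^ nn * kleinA ^ p
      = kleinA ^ p * (kleinA ^ (-p : ℤ) * kleinB ^ nn * kleinA ^ p) := by group
    _ = kleinA ^ p * kleinB ^ (Kl.e p * nn) := by rw [h]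

/-- The homomorphism from the concrete model to the presented group. -/
def ofKl : Kl →* KleinBottleGroup where
  toFun x := kleinA ^ x.m * kleinB ^ x.n
  map_one' := by simp
  map_mul' x y := by
    obtain ⟨m, n⟩ := x
    obtain ⟨p, q⟩ := y
    show kleinA ^ (m + p) * kleinB ^ (Kl.e p * n + q) = _
    rw [zpow_add, zpow_add]
    calc kleinA ^ m * kleinA ^ p * (kleinB ^ (Kl.e p * n) * kleinB ^ q)
        = kleinA ^ m * (kleinA ^ p * kleinB ^ (Kl.e p * n)) * kleinB ^ q := by group
      _ = kleinA ^ m * (kleinB ^ n * kleinA ^ p) * kleinB ^ q := by rw [← key]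
      _ = kleinA ^ m * kleinB ^ n * (kleinA ^ p * kleinB ^ q) := by group

@[simp] lemma ofKl_apply (x : Kl) : ofKl x = kleinA ^ x.m * kleinB ^ x.n := rfl

lemma toKl_ofKl (x : Kl) : toKl (ofKl x) = x := by
  obtain ⟨m, n⟩ := x
  simp only [ofKl_apply, map_mul, map_zpow, toKl_a, toKl_b, Kl.apow, Kl.bpow]
  simp

lemma ofKl_toKl (x : KleinBottleGroup) : ofKl (toKl x) = x := by
  have h : ofKl.comp toKl = MonoidHom.id _ := by
    apply PresentedGroup.ext
    intro i
    fin_cases i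
    · show ofKl (toKl kleinA) = kleinA
      simp
    · show ofKl (toKl kleinB) = kleinB
      simp
  calc ofKl (toKl x) = (ofKl.comp toKl) x := rfl
    _ = x := by rw [h]; rfl

end KB

lemma Kl.eq_of_m_zero (x : Kl) (h : x.m = 0) : x = ⟨0, x.n⟩ := by
  obtain ⟨m, n⟩ := x
  simp only at h
  subst h
  rfl

/-- Every automorphism of the Klein bottle group sends `b` to `b` or `b⁻¹`. -/
theorem kleinBottle_aut_b (φ : KleinBottleGroup ≃* KleinBottleGroup) :
    φ kleinB = kleinB ∨ φ kleinB = kleinB⁻¹ := by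
  have hconj : ∀ (ψ : KleinBottleGroup ≃* KleinBottleGroup), (KB.toKl (ψ kleinB)).m = 0 := by
    intro ψ
    apply (Kl.m_eq_zero_iff _).mpr
    refine ⟨KB.toKl (ψ kleinA), ?_⟩
    have h : ψ kleinA * ψ kleinB * (ψ kleinA)⁻¹ = (ψ kleinB)⁻¹ := by
      have h0 := congrArg ψ KB.conj_b
      simpa [map_mul, map_inv] using h0
    calc KB.toKl (ψ kleinA) * KB.toKl (ψ kleinB) * (KB.toKl (ψ kleinA))⁻¹
        = KB.toKl (ψ kleinA * ψ kleinB * (ψ kleinA)⁻¹) := by simp [map_mul, map_inv]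
      _ = (KB.toKl (ψ kleinB))⁻¹ := by rw [h, map_inv]
  set n : ℤ := (KB.toKl (φ kleinB)).n with hn
  set k : ℤ := (KB.toKl (φ.symm kleinB)).n with hk
  have hφ : KB.toKl (φ kleinB) = ⟨0, n⟩ := Kl.eq_of_m_zero _ (hconj φ)
  have hφs : KB.toKl (φ.symm kleinB) = ⟨0, k⟩ := Kl.eq_of_m_zero _ (hconj φ.symm)
  have hsymm : φ.symm kleinB = kleinB ^ k := by
    have h := KB.ofKl_toKl (φ.symm kleinB)
    rw [hφs] at h
    simpa using h.symm
  have hb : kleinB = (φ kleinB) ^ k := by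
    conv_lhs => rw [← φ.apply_symm_apply kleinB, hsymm, map_zpow]
  have hnk : (⟨0, 1⟩ : Kl) = ⟨0, n * k⟩ := by
    calc (⟨0, 1⟩ : Kl) = KB.toKl kleinB := by simp
      _ = KB.toKl ((φ kleinB) ^ k) := by rw [← hb]
      _ = (⟨0, n⟩ : Kl) ^ k := by rw [map_zpow, hφ]
      _ = ⟨0, n * k⟩ := Kl.bn_pow n k
  have hnk1 : n * k = 1 := by
    have := congrArg Kl.n hnk
    simpa using this.symm
  have hfb : φ kleinB = kleinB ^ n := by
    have h := KB.ofKl_toKl (φ kleinB)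
    rw [hφ] at h
    simpa using h.symm
  rcases Int.eq_one_or_neg_one_of_mul_eq_one hnk1 with h1 | h1
  · left; rw [hfb, h1, zpow_one]
  · right; rw [hfb, h1]; group
end

section
/- Let B = ⟨a, b ∣ a b a⁻¹ b = 1⟩ be the Klein bottle group and let A be the subgroup of B generated by a² and b. Then every automorphism φ of B maps A onto A, i.e. φ(A) = A. -/
abbrev MZ := Multiplicative ℤ

def invAut : MulAut MZ := MulEquiv.inv MZ

def actK : MZ →* MulAut MZ := zpowersHom _ invAut

abbrev K := SemidirectProduct MZ MZ actK

lemma invAut_apply (x : MZ) : invAut x = x⁻¹ := rfl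

lemma invAut_inv : invAut⁻¹ = invAut := by
  ext x
  have h : invAut (invAut x) = x := by rw [invAut_apply, invAut_apply, inv_inv]
  calc (invAut⁻¹) x = invAut⁻¹ (invAut (invAut x)) := by rw [h]
    _ = invAut x := by rw [← MulAut.mul_apply, inv_mul_cancel, MulAut.one_apply]

lemma invAut_sq : invAut ^ (2:ℤ) = 1 := by
  ext x
  rw [show (2:ℤ) = 1 + 1 by norm_num, zpow_add, zpow_one]
  rw [MulAut.mul_apply, invAut_apply, invAut_apply, inv_inv]
  rfl

lemma invAut_even {m : ℤ} (h : Even m) : invAut ^ m = 1 := by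
  obtain ⟨k, rfl⟩ := h
  rw [show k + k = 2 * k by ring, zpow_mul, invAut_sq, one_zpow]

lemma invAut_odd {m : ℤ} (h : Odd m) : invAut ^ m = invAut := by
  obtain ⟨k, rfl⟩ := h
  rw [zpow_add, zpow_mul, invAut_sq, one_zpow, one_mul, zpow_one]

lemma actK_apply (m : ℤ) : actK (Multiplicative.ofAdd m) = invAut ^ m := by
  simp [actK, zpowersHom_apply]

lemma invAut_zpow_succ (m : ℤ) (x : MZ) :
    (invAut ^ (m + 1)) x = ((invAut ^ m) x)⁻¹ := by
  rw [zpow_add, zpow_one, MulAut.mul_apply, invAut_apply, map_inv]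

lemma invAut_zpow_pred (m : ℤ) (x : MZ) :
    (invAut ^ (m - 1)) x = ((invAut ^ m) x)⁻¹ := by
  rw [sub_eq_add_neg, zpow_add, zpow_neg_one, invAut_inv, MulAut.mul_apply, invAut_apply, map_inv]

/-- The index-two subgroup `A = ⟨a², b⟩` of the Klein bottle group. -/
def kleinTorusSubgroup : Subgroup KleinBottleGroup :=
  Subgroup.closure {kleinA ^ 2, kleinB}

lemma klein_conj_aut : MulAut.conj kleinA kleinB = kleinB⁻¹ := by
  simpa [MulAut.conj_apply] using klein_conj

lemma klein_conj_aut' : (MulAut.conj kleinA)⁻¹ kleinB = kleinB⁻¹ := by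
  have h : MulAut.conj kleinA kleinB⁻¹ = kleinB := by rw [map_inv, klein_conj_aut, inv_inv]
  calc (MulAut.conj kleinA)⁻¹ kleinB
      = (MulAut.conj kleinA)⁻¹ (MulAut.conj kleinA kleinB⁻¹) := by rw [h]
    _ = kleinB⁻¹ := by rw [← MulAut.mul_apply, inv_mul_cancel, MulAut.one_apply]

lemma conjA (m : ℤ) : (MulAut.conj kleinA ^ m) kleinB
    = kleinB ^ (Multiplicative.toAdd ((invAut ^ m) (Multiplicative.ofAdd (1:ℤ)))) := by
  induction m using Int.induction_on with
  | zero => simp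
  | succ n ih =>
      rw [invAut_zpow_succ, toAdd_inv, zpow_neg, ← ih]
      rw [zpow_add, zpow_one, MulAut.mul_apply, klein_conj_aut, map_inv]
  | pred n ih =>
      rw [show (-(n:ℤ) - 1) = (-n) - 1 by ring, invAut_zpow_pred, toAdd_inv, zpow_neg, ← ih]
      rw [sub_eq_add_neg, zpow_add, zpow_neg_one, MulAut.mul_apply, klein_conj_aut', map_inv]

lemma hcompat : ∀ g : MZ, (zpowersHom _ kleinB).comp (actK g).toMonoidHom
    = (MulAut.conj ((zpowersHom _ kleinA) g)).toMonoidHom.comp (zpowersHom _ kleinB) := by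
  intro g
  apply MonoidHom.ext_mint
  simp only [MonoidHom.comp_apply, MulEquiv.coe_toMonoidHom, zpowersHom_apply]
  rw [show g = Multiplicative.ofAdd g.toAdd from rfl, actK_apply]
  simp [conjA, map_zpow]

open SemidirectProduct in
def ofK : K →* KleinBottleGroup :=
  SemidirectProduct.lift (zpowersHom _ kleinB) (zpowersHom _ kleinA) hcompat

def kGen : Fin 2 → K := ![SemidirectProduct.inr (Multiplicative.ofAdd 1),
  SemidirectProduct.inl (Multiplicative.ofAdd 1)]

lemma kGen_rel : ∀ r ∈ kleinBottleRels, FreeGroup.lift kGen r = 1 := by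
  intro r hr
  rw [Set.mem_singleton_iff.mp hr]
  simp only [map_mul, map_inv, FreeGroup.lift_apply_of, kGen]
  simp only [Matrix.cons_val_zero, Matrix.cons_val_one, Matrix.head_cons]
  rw [← map_inv, ← SemidirectProduct.inl_aut, ← map_mul]
  rw [actK_apply, zpow_one, invAut_apply, inv_mul_cancel, map_one]

def toK : KleinBottleGroup →* K := PresentedGroup.toGroup kGen_rel

lemma toK_a : toK kleinA = SemidirectProduct.inr (Multiplicative.ofAdd 1) := by
  rw [kleinA, toK, PresentedGroup.toGroup.of]
  rfl

lemma toK_b : toK kleinB = SemidirectProduct.inl (Multiplicative.ofAdd 1) := by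
  rw [kleinB, toK, PresentedGroup.toGroup.of]
  rfl

lemma ofK_inl (n : MZ) : ofK (SemidirectProduct.inl n) = kleinB ^ n.toAdd := by
  rw [ofK, SemidirectProduct.lift_inl, zpowersHom_apply]

lemma ofK_inr (g : MZ) : ofK (SemidirectProduct.inr g) = kleinA ^ g.toAdd := by
  rw [ofK, SemidirectProduct.lift_inr, zpowersHom_apply]

lemma ofK_toK : ofK.comp toK = MonoidHom.id _ := by
  apply PresentedGroup.ext
  intro x
  fin_cases x
  · show ofK (toK kleinA) = kleinA
    rw [toK_a, ofK_inr]
    simp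
  · show ofK (toK kleinB) = kleinB
    rw [toK_b, ofK_inl]
    simp

lemma toK_ofK : toK.comp ofK = MonoidHom.id _ := by
  apply SemidirectProduct.hom_ext
  · apply MonoidHom.ext_mint
    simp only [MonoidHom.comp_apply, MonoidHom.id_apply]
    rw [ofK_inl]
    simp [toK_b]
  · apply MonoidHom.ext_mint
    simp only [MonoidHom.comp_apply, MonoidHom.id_apply]
    rw [ofK_inr]
    simp [toK_a]

def eK : KleinBottleGroup ≃* K := MonoidHom.toMulEquiv toK ofK ofK_toK toK_ofK

def parityHom : K →* Multiplicative (ZMod 2) :=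
  (AddMonoidHom.toMultiplicative (Int.castAddHom (ZMod 2))).comp SemidirectProduct.rightHom

def rho : KleinBottleGroup →* Multiplicative (ZMod 2) := parityHom.comp toK

lemma parityHom_apply (x : K) :
    parityHom x = Multiplicative.ofAdd ((Multiplicative.toAdd x.right : ℤ) : ZMod 2) := by
  rfl

lemma rho_a : rho kleinA = Multiplicative.ofAdd (1 : ZMod 2) := by
  rw [rho, MonoidHom.comp_apply, toK_a, parityHom_apply]
  norm_num

lemma rho_b : rho kleinB = 1 := by
  rw [rho, MonoidHom.comp_apply, toK_b, parityHom_apply]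
  norm_num

lemma A_eq_ker : kleinTorusSubgroup = rho.ker := by
  apply le_antisymm
  · rw [kleinTorusSubgroup, Subgroup.closure_le]
    rintro x (rfl | rfl)
    · rw [SetLike.mem_coe, MonoidHom.mem_ker, map_pow, rho_a]
      decide
    · rw [SetLike.mem_coe, MonoidHom.mem_ker, rho_b]
  · intro g hg
    have hgx : g = ofK (toK g) := (DFunLike.congr_fun ofK_toK g).symm
    rw [← SemidirectProduct.inl_left_mul_inr_right (toK g), map_mul, ofK_inl, ofK_inr] at hgx
    rw [MonoidHom.mem_ker, rho, MonoidHom.comp_apply, parityHom_apply] at hg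
    have h2 := (ZMod.intCast_zmod_eq_zero_iff_dvd (Multiplicative.toAdd (toK g).right) 2).mp
      (ofAdd_eq_one.mp hg)
    obtain ⟨k, hk⟩ := h2
    push_cast at hk
    rw [hgx, hk]
    apply Subgroup.mul_mem
    · exact Subgroup.zpow_mem _ (Subgroup.subset_closure (by simp [kleinTorusSubgroup])) _
    · have : kleinA ^ (2*k) = (kleinA^2)^k := by
        rw [zpow_mul, show ((2:ℤ)) = ((2:ℕ):ℤ) from rfl, zpow_natCast]
      rw [this]
      exact Subgroup.zpow_mem _ (Subgroup.subset_closure (by simp [kleinTorusSubgroup])) _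

def conjSet : Set KleinBottleGroup := {x | ∃ y, y * x * y⁻¹ = x⁻¹}

lemma kleinB_mem_conjSet : kleinB ∈ conjSet := ⟨kleinA, klein_conj⟩

lemma toK_injective : Function.Injective ⇑toK := fun u v h => by
  have hu := DFunLike.congr_fun ofK_toK u
  have hv := DFunLike.congr_fun ofK_toK v
  simp only [MonoidHom.comp_apply, MonoidHom.id_apply] at hu hv
  rw [← hu, ← hv, h]

lemma actK_ofAdd_one : actK (Multiplicative.ofAdd 1) = invAut := by
  rw [actK_apply, zpow_one]

lemma conjSet_right {s : KleinBottleGroup} (hs : s ∈ conjSet) :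
    toK s = SemidirectProduct.inl (toK s).left := by
  obtain ⟨y, hy⟩ := hs
  have h := congrArg (SemidirectProduct.rightHom.comp toK) hy
  simp only [MonoidHom.comp_apply, map_mul, map_inv] at h
  rw [mul_comm (SemidirectProduct.rightHom (toK y)), mul_inv_cancel_right] at h
  have h1 : SemidirectProduct.rightHom (toK s) = 1 := by
    have h3 := congrArg Multiplicative.toAdd h
    simp only [toAdd_inv] at h3
    have h0 : Multiplicative.toAdd (SemidirectProduct.rightHom (toK s)) = 0 := by omega
    rw [← ofAdd_toAdd (SemidirectProduct.rightHom (toK s)), h0, ofAdd_zero]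
  nth_rewrite 1 [← SemidirectProduct.inl_left_mul_inr_right (toK s)]
  rw [← SemidirectProduct.rightHom_eq_right, h1, map_one, mul_one]

lemma cent_eq : Subgroup.centralizer conjSet = kleinTorusSubgroup := by
  apply le_antisymm
  · rw [A_eq_ker]
    intro g hg
    have hb := Subgroup.mem_centralizer_iff.mp hg kleinB kleinB_mem_conjSet
    have hK := congrArg toK hb
    simp only [map_mul, toK_b] at hK
    have hleft := congrArg SemidirectProduct.left hK
    simp only [SemidirectProduct.mul_left, SemidirectProduct.left_inl,
      SemidirectProduct.right_inl, map_one, MulAut.one_apply] at hleft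
    rw [mul_comm] at hleft
    have hact : (actK (toK g).right) (Multiplicative.ofAdd 1) = Multiplicative.ofAdd 1 :=
      (mul_left_cancel hleft).symm
    rw [MonoidHom.mem_ker, rho, MonoidHom.comp_apply, parityHom_apply]
    rcases Int.even_or_odd (Multiplicative.toAdd (toK g).right) with he | ho
    · rw [ofAdd_eq_one, ZMod.intCast_zmod_eq_zero_iff_dvd]
      obtain ⟨k, hk⟩ := he
      exact ⟨k, by push_cast; omega⟩
    · exfalso
      rw [show (toK g).right = Multiplicative.ofAdd (Multiplicative.toAdd (toK g).right) from rfl,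
        actK_apply, invAut_odd ho, invAut_apply] at hact
      have h5 := congrArg Multiplicative.toAdd hact
      simp only [toAdd_inv, toAdd_ofAdd] at h5
      omega
  · have hA2 : toK (kleinA^2) = SemidirectProduct.inr (Multiplicative.ofAdd (2:ℤ)) := by
      rw [map_pow, toK_a, ← map_pow]
      congr 1
    have hact2 : actK (Multiplicative.ofAdd (2:ℤ)) = 1 := by rw [actK_apply, invAut_sq]
    rw [kleinTorusSubgroup, Subgroup.closure_le]
    rintro x (rfl | rfl) <;> rw [SetLike.mem_coe, Subgroup.mem_centralizer_iff] <;>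
      intro s hs <;> apply toK_injective <;>
      rw [map_mul, map_mul, conjSet_right hs] <;>
      apply SemidirectProduct.ext
    · simp [hA2, SemidirectProduct.mul_left, hact2]
    · simp [hA2, SemidirectProduct.mul_right]
    · simp [toK_b, SemidirectProduct.mul_left, mul_comm]
    · simp [toK_b, SemidirectProduct.mul_right]

lemma conjSet_image (φ : KleinBottleGroup ≃* KleinBottleGroup) : ⇑φ '' conjSet = conjSet := by
  ext x
  constructor
  · rintro ⟨z, ⟨y, hy⟩, rfl⟩
    exact ⟨φ y, by rw [← map_inv, ← map_inv, ← map_mul, ← map_mul, hy]⟩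
  · rintro ⟨y, hy⟩
    refine ⟨φ.symm x, ⟨φ.symm y, ?_⟩, φ.apply_symm_apply x⟩
    apply φ.injective
    simp only [map_mul, map_inv, MulEquiv.apply_symm_apply]
    exact hy

lemma map_cent (φ : KleinBottleGroup ≃* KleinBottleGroup) (S : Set KleinBottleGroup) :
    Subgroup.map (φ : KleinBottleGroup →* KleinBottleGroup) (Subgroup.centralizer S)
      = Subgroup.centralizer (⇑φ '' S) := by
  ext x
  simp only [Subgroup.mem_map, Subgroup.mem_centralizer_iff]
  constructor
  · rintro ⟨z, hz, rfl⟩ g ⟨s, hs, rfl⟩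
    show φ s * φ z = φ z * φ s
    rw [← map_mul, ← map_mul, hz s hs]
  · intro hx
    refine ⟨φ.symm x, ?_, φ.apply_symm_apply x⟩
    intro s hs
    apply φ.injective
    rw [map_mul, map_mul, φ.apply_symm_apply]
    exact hx (φ s) ⟨s, hs, rfl⟩

/-- Every automorphism of the Klein bottle group preserves the subgroup `A = ⟨a², b⟩`. -/
theorem kleinBottle_aut_preserves_A (φ : KleinBottleGroup ≃* KleinBottleGroup) :
    Subgroup.map (φ : KleinBottleGroup →* KleinBottleGroup) kleinTorusSubgroup
      = kleinTorusSubgroup := by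
  rw [← cent_eq, map_cent, conjSet_image]
end

section
/- Let k ≥ 1 be an odd integer, let N_k = ⟨a₁, …, a_k ∣ a₁² a₂² ⋯ a_k² = 1⟩ be the fundamental group of the closed nonorientable surface of genus k, and let M ∈ GL(2, ℤ) with det M = −1. Let G_M = ℤ² ⋊_M ℤ be the semidirect product in which the generator of ℤ acts on ℤ² by M, and let p : G_M → ℤ be the projection onto the ℤ factor. Then there is no group homomorphism f : N_k → G_M such that p(f(aᵢ)) is odd for every i = 1, …, k. (This is the algebraic form of the statement that a closed surface of odd Euler characteristic admits no 2-sided map to a torus bundle over S¹ with monodromy M.) -/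
open Matrix

/-- The additive automorphism of `ℤ²` given by an invertible integer matrix. -/
def matrixAddAut (M : GL (Fin 2) ℤ) : (Fin 2 → ℤ) ≃+ (Fin 2 → ℤ) where
  toFun v := (M : Matrix (Fin 2) (Fin 2) ℤ).mulVec v
  invFun v := (↑M⁻¹ : Matrix (Fin 2) (Fin 2) ℤ).mulVec v
  left_inv v := by
    simp only [Matrix.mulVec_mulVec, ← Units.val_mul, inv_mul_cancel, Units.val_one,
      Matrix.one_mulVec]
  right_inv v := by
    simp only [Matrix.mulVec_mulVec, ← Units.val_mul, mul_inv_cancel, Units.val_one,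
      Matrix.one_mulVec]
  map_add' u v := by simp [Matrix.mulVec_add]

/-- The action of `ℤ` on `ℤ²` in which the generator `1` acts by the matrix `M`. -/
def torusBundleAction (M : GL (Fin 2) ℤ) :
    Multiplicative ℤ →* MulAut (Multiplicative (Fin 2 → ℤ)) :=
  zpowersHom _ (AddEquiv.toMultiplicative (matrixAddAut M))

/-- The fundamental group `G_M = ℤ² ⋊_M ℤ` of the torus bundle over `S¹` with
monodromy `M`. -/
abbrev TorusBundleGroup (M : GL (Fin 2) ℤ) : Type :=
  SemidirectProduct (Multiplicative (Fin 2 → ℤ)) (Multiplicative ℤ) (torusBundleAction M)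

/-- The projection `G_M → ℤ` onto the `ℤ` factor. -/
def torusBundleProj (M : GL (Fin 2) ℤ) (x : TorusBundleGroup M) : ℤ :=
  (SemidirectProduct.rightHom x).toAdd

/-- The single relator `a₁² a₂² ⋯ a_k²` of the fundamental group of the closed
nonorientable surface of genus `k`. -/
def nonorientableSurfaceRels (k : ℕ) : Set (FreeGroup (Fin k)) :=
  {(List.ofFn fun i : Fin k => (FreeGroup.of i) ^ 2).prod}

/-- The fundamental group `N_k = ⟨a₁, …, a_k ∣ a₁² a₂² ⋯ a_k² = 1⟩` of the closed
nonorientable surface of genus `k`. -/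
abbrev NonorientableSurfaceGroup (k : ℕ) : Type :=
  PresentedGroup (nonorientableSurfaceRels k)

/-- If `k` is odd (so the closed nonorientable surface of genus `k` has odd Euler
characteristic) and `det M = -1`, there is no homomorphism `f : N_k → G_M` with
`p (f aᵢ)` odd for every `i`; i.e. no 2-sided map from the surface to the torus
bundle with monodromy `M`. -/
theorem no_two_sided_map_of_odd_genus (k : ℕ) (hk : 1 ≤ k) (hodd : Odd k)
    (M : GL (Fin 2) ℤ) (hM : (M : Matrix (Fin 2) (Fin 2) ℤ).det = -1) :
    ¬ ∃ f : NonorientableSurfaceGroup k →* TorusBundleGroup M,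
        ∀ i : Fin k, Odd (torusBundleProj M (f (PresentedGroup.of i))) := by
  rintro ⟨f, hf⟩
  set g : FreeGroup (Fin k) →* Multiplicative ℤ :=
    (SemidirectProduct.rightHom).comp (f.comp (PresentedGroup.mk (nonorientableSurfaceRels k)))
    with hg
  have hrel : g ((List.ofFn fun i : Fin k => (FreeGroup.of i) ^ 2).prod) = 1 := by
    have h1 : PresentedGroup.mk (nonorientableSurfaceRels k)
        ((List.ofFn fun i : Fin k => (FreeGroup.of i) ^ 2).prod) = 1 := by
      apply (QuotientGroup.eq_one_iff _).mpr
      exact Subgroup.subset_normalClosure rfl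
    simp [hg, MonoidHom.comp_apply, h1]
  have hsum2 : (∑ i : Fin k, Multiplicative.toAdd (g (FreeGroup.of i))) * 2 = 0 := by
    have h0 : Multiplicative.toAdd
        (g ((List.ofFn fun i : Fin k => (FreeGroup.of i) ^ 2).prod)) = 0 := by
      rw [hrel]; rfl
    rw [map_list_prod, List.map_ofFn] at h0
    rw [Finset.sum_mul, ← h0, List.prod_ofFn, toAdd_prod]
    congr 1
    funext i
    simp [mul_comm]
  have hsum : (∑ i : Fin k, Multiplicative.toAdd (g (FreeGroup.of i))) = 0 := by omega
  have hcast : ∀ i : Fin k,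
      ((Multiplicative.toAdd (g (FreeGroup.of i)) : ℤ) : ZMod 2) = 1 := by
    intro i
    obtain ⟨m, hm⟩ := hf i
    have he : Multiplicative.toAdd (g (FreeGroup.of i))
        = torusBundleProj M (f (PresentedGroup.of i)) := rfl
    rw [he, hm]
    push_cast
    rw [show ((2 : ZMod 2)) = 0 by decide, zero_mul, zero_add]
  have h2 : ((∑ i : Fin k, Multiplicative.toAdd (g (FreeGroup.of i)) : ℤ) : ZMod 2)
      = (k : ZMod 2) := by
    push_cast
    rw [Finset.sum_congr rfl (fun i _ => hcast i)]
    simp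
  rw [hsum] at h2
  obtain ⟨m, hm⟩ := hodd
  rw [hm] at h2
  push_cast at h2
  simp [show ((2 : ZMod 2)) = 0 by decide] at h2
end

section
/- Let r, s, t, u be integers with ru − st = 1 or ru − st = −1, and let G(r,s,t,u) = ⟨x₁, y₁, x₂, y₂ ∣ x₁y₁x₁⁻¹y₁ = 1, x₂y₂x₂⁻¹y₂ = 1, x₁² = x₂^{2r} y₂^{t}, y₁ = x₂^{2s} y₂^{u}⟩. Then the map ℤ × ℤ → G(r,s,t,u) sending (m, n) to x₂^{2m} y₂^{n} is an injective group homomorphism; in particular the subgroup generated by x₂² and y₂ is free abelian of rank 2. -/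
/-- The relators of the fundamental group of the orientable torus semi-bundle with
gluing matrix `((r, s), (t, u))`: with `x₁, y₁, x₂, y₂` the generators
`FreeGroup.of 0, …, FreeGroup.of 3`, the relators are `x₁y₁x₁⁻¹y₁`, `x₂y₂x₂⁻¹y₂`,
`x₁² (x₂^{2r} y₂^{t})⁻¹` and `y₁ (x₂^{2s} y₂^{u})⁻¹`. -/
def semiBundleRels (r s t u : ℤ) : Set (FreeGroup (Fin 4)) :=
  {FreeGroup.of 0 * FreeGroup.of 1 * (FreeGroup.of 0)⁻¹ * FreeGroup.of 1,
   FreeGroup.of 2 * FreeGroup.of 3 * (FreeGroup.of 2)⁻¹ * FreeGroup.of 3,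
   (FreeGroup.of 0) ^ 2 * ((FreeGroup.of 2) ^ (2 * r) * (FreeGroup.of 3) ^ t)⁻¹,
   FreeGroup.of 1 * ((FreeGroup.of 2) ^ (2 * s) * (FreeGroup.of 3) ^ u)⁻¹}

/-- The fundamental group `G(r,s,t,u)` of the orientable torus semi-bundle with
gluing matrix `((r, s), (t, u))`. -/
abbrev SemiBundleGroup (r s t u : ℤ) : Type := PresentedGroup (semiBundleRels r s t u)

/-- The generator `x₁` of `G(r,s,t,u)`. -/
def sbX₁ (r s t u : ℤ) : SemiBundleGroup r s t u := PresentedGroup.of 0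
/-- The generator `y₁` of `G(r,s,t,u)`. -/
def sbY₁ (r s t u : ℤ) : SemiBundleGroup r s t u := PresentedGroup.of 1
/-- The generator `x₂` of `G(r,s,t,u)`. -/
def sbX₂ (r s t u : ℤ) : SemiBundleGroup r s t u := PresentedGroup.of 2
/-- The generator `y₂` of `G(r,s,t,u)`. -/
def sbY₂ (r s t u : ℤ) : SemiBundleGroup r s t u := PresentedGroup.of 3

namespace SemiBundleAux

abbrev M3 : Type := Matrix (Fin 3) (Fin 3) ℚ

/-- The translation by `(a, b)` as an affine `3 × 3` matrix unit. -/
def tr (a b : ℚ) : M3ˣ :=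
  ⟨!![1,0,a;0,1,b;0,0,1], !![1,0,-a;0,1,-b;0,0,1],
    by rw [Matrix.one_fin_three]; norm_num [Matrix.mul_fin_three],
    by rw [Matrix.one_fin_three]; norm_num [Matrix.mul_fin_three]⟩

@[simp] lemma tr_val (a b : ℚ) : ((tr a b : M3ˣ) : M3) = !![1,0,a;0,1,b;0,0,1] := rfl
@[simp] lemma tr_inv_val (a b : ℚ) : (((tr a b)⁻¹ : M3ˣ) : M3) = !![1,0,-a;0,1,-b;0,0,1] := rfl

lemma tr_mul (a b c d : ℚ) : tr a b * tr c d = tr (a + c) (b + d) := by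
  ext : 1
  show (!![1,0,a;0,1,b;0,0,1] : M3) * !![1,0,c;0,1,d;0,0,1] = !![1,0,a+c;0,1,b+d;0,0,1]
  ext i j
  fin_cases i <;> fin_cases j <;>
    simp [Matrix.mul_apply, Fin.sum_univ_three, Matrix.vecHead, Matrix.vecTail] <;> ring_nf

lemma tr_zero : tr 0 0 = 1 := by
  ext : 1
  show (!![1,0,(0:ℚ);0,1,0;0,0,1] : M3) = 1
  rw [Matrix.one_fin_three]

lemma tr_inv (a b : ℚ) : (tr a b)⁻¹ = tr (-a) (-b) := by
  ext : 1
  rfl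

lemma tr_zpow (a b : ℚ) (n : ℤ) : tr a b ^ n = tr (n * a) (n * b) := by
  induction n using Int.induction_on with
  | zero => simpa using tr_zero.symm
  | succ k ih =>
      rw [zpow_add_one, ih, tr_mul]
      push_cast
      ring_nf
  | pred k ih =>
      rw [zpow_sub_one, ih, tr_inv, tr_mul]
      push_cast
      ring_nf

/-- `x₂` acts as the glide reflection `(x, y) ↦ (x + 1/2, -y)`. -/
def mX₂ : M3ˣ :=
  ⟨!![1,0,1/2;0,-1,0;0,0,1], !![1,0,-1/2;0,-1,0;0,0,1],
    by rw [Matrix.one_fin_three]; norm_num [Matrix.mul_fin_three],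
    by rw [Matrix.one_fin_three]; norm_num [Matrix.mul_fin_three]⟩

@[simp] lemma mX₂_val : ((mX₂ : M3ˣ) : M3) = !![1,0,1/2;0,-1,0;0,0,1] := rfl
@[simp] lemma mX₂_inv_val : ((mX₂⁻¹ : M3ˣ) : M3) = !![1,0,-1/2;0,-1,0;0,0,1] := rfl

lemma mX₂_sq : mX₂ ^ 2 = tr 1 0 := by
  rw [pow_two]
  ext : 1
  show (!![1,0,1/2;0,-1,0;0,0,1] : M3) * !![1,0,1/2;0,-1,0;0,0,1] = !![1,0,1;0,1,0;0,0,1]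
  ext i j
  fin_cases i <;> fin_cases j <;>
    simp [Matrix.mul_apply, Fin.sum_univ_three, Matrix.vecHead, Matrix.vecTail] <;> norm_num

section X1

variable (r s t u : ℤ)

/-- The determinant `ru - st`, as a rational number. -/
abbrev dt : ℚ := (r : ℚ) * (u : ℚ) - (s : ℚ) * (t : ℚ)

variable (h1 : dt r s t u * dt r s t u = 1)

/-- `x₁` acts as the affine map with linear part the involution fixing `(r, t)` and
negating `(s, u)` (scaled by `d = ru - st = ±1`), translating by `(r/2, t/2)`. -/
def mX₁ : M3ˣ :=
  ⟨!![dt r s t u*(r*u+s*t), -2*dt r s t u*r*s, r/2;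
      2*dt r s t u*t*u, -(dt r s t u*(r*u+s*t)), t/2; 0,0,1],
   !![dt r s t u*(r*u+s*t), -2*dt r s t u*r*s, -(r/2);
      2*dt r s t u*t*u, -(dt r s t u*(r*u+s*t)), -(t/2); 0,0,1],
   by
    ext i j
    fin_cases i <;> fin_cases j <;>
      simp [Matrix.mul_apply, Fin.sum_univ_three, Matrix.one_apply, Matrix.vecHead,
        Matrix.vecTail] <;>
      first
        | ring1
        | linear_combination (dt r s t u^2+1)*h1
        | linear_combination (-(dt r s t u^2+1))*h1
        | linear_combination ((r:ℚ)/2)*h1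
        | linear_combination (-((r:ℚ)/2))*h1
        | linear_combination ((t:ℚ)/2)*h1
        | linear_combination (-((t:ℚ)/2))*h1,
   by
    ext i j
    fin_cases i <;> fin_cases j <;>
      simp [Matrix.mul_apply, Fin.sum_univ_three, Matrix.one_apply, Matrix.vecHead,
        Matrix.vecTail] <;>
      first
        | ring1
        | linear_combination (dt r s t u^2+1)*h1
        | linear_combination (-(dt r s t u^2+1))*h1
        | linear_combination ((r:ℚ)/2)*h1
        | linear_combination (-((r:ℚ)/2))*h1
        | linear_combination ((t:ℚ)/2)*h1
        | linear_combination (-((t:ℚ)/2))*h1⟩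

@[simp] lemma mX₁_val :
    ((mX₁ r s t u h1 : M3ˣ) : M3) =
      !![dt r s t u*(r*u+s*t), -2*dt r s t u*r*s, r/2;
         2*dt r s t u*t*u, -(dt r s t u*(r*u+s*t)), t/2; 0,0,1] := rfl

@[simp] lemma mX₁_inv_val :
    (((mX₁ r s t u h1)⁻¹ : M3ˣ) : M3) =
      !![dt r s t u*(r*u+s*t), -2*dt r s t u*r*s, -(r/2);
         2*dt r s t u*t*u, -(dt r s t u*(r*u+s*t)), -(t/2); 0,0,1] := rfl

set_option maxHeartbeats 1000000 in
lemma rel1 : mX₁ r s t u h1 * tr s u * (mX₁ r s t u h1)⁻¹ * tr s u = 1 := by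
  ext : 1
  simp only [Units.val_mul, mX₁_val, mX₁_inv_val, tr_val, Units.val_one]
  ext i j
  fin_cases i <;> fin_cases j <;>
    simp [Matrix.mul_apply, Fin.sum_univ_three, Matrix.one_apply, Matrix.vecHead,
      Matrix.vecTail] <;>
    first
      | ring1
      | linear_combination (dt r s t u^2+1)*h1
      | linear_combination (-(dt r s t u^2+1))*h1
      | linear_combination (dt r s t u^2*(s:ℚ)-(r:ℚ)/2)*h1
      | linear_combination (-(dt r s t u^2*(s:ℚ)-(r:ℚ)/2))*h1
      | linear_combination (dt r s t u^2*(u:ℚ)-(t:ℚ)/2)*h1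
      | linear_combination (-(dt r s t u^2*(u:ℚ)-(t:ℚ)/2))*h1

lemma rel2 : mX₂ * tr 0 1 * mX₂⁻¹ * tr 0 1 = 1 := by
  ext : 1
  simp only [Units.val_mul, mX₂_val, mX₂_inv_val, tr_val, Units.val_one]
  ext i j
  fin_cases i <;> fin_cases j <;>
    simp [Matrix.mul_apply, Fin.sum_univ_three, Matrix.one_apply, Matrix.vecHead,
      Matrix.vecTail] <;>
    norm_num

set_option maxHeartbeats 1000000 in
lemma rel3 : mX₁ r s t u h1 ^ 2 = tr r t := by
  rw [pow_two]
  ext : 1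
  simp only [Units.val_mul, mX₁_val, tr_val]
  ext i j
  fin_cases i <;> fin_cases j <;>
    simp [Matrix.mul_apply, Fin.sum_univ_three, Matrix.one_apply, Matrix.vecHead,
      Matrix.vecTail] <;>
    first
      | ring1
      | linear_combination (dt r s t u^2+1)*h1
      | linear_combination (-(dt r s t u^2+1))*h1
      | linear_combination ((r:ℚ)/2)*h1
      | linear_combination (-((r:ℚ)/2))*h1
      | linear_combination ((t:ℚ)/2)*h1
      | linear_combination (-((t:ℚ)/2))*h1

end X1

lemma mX₂_zpow_two_mul (m : ℤ) : mX₂ ^ (2 * m) = tr m 0 := by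
  have h : mX₂ ^ (2 : ℤ) = tr 1 0 := by
    rw [zpow_two, ← pow_two, mX₂_sq]
  rw [zpow_mul, h, tr_zpow]
  norm_num

lemma tr01_zpow (n : ℤ) : (tr 0 1) ^ n = tr 0 n := by
  rw [tr_zpow]; norm_num

end SemiBundleAux


/-- The map `(m, n) ↦ x₂^{2m} y₂^{n}` is an injective group homomorphism from
`ℤ × ℤ` into `G(r,s,t,u)`; in particular the subgroup `⟨x₂², y₂⟩` is free abelian
of rank 2. -/
theorem semiBundle_peripheral_free_abelian (r s t u : ℤ)
    (hdet : r * u - s * t = 1 ∨ r * u - s * t = -1) :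
    Function.Injective
      (fun p : ℤ × ℤ => sbX₂ r s t u ^ (2 * p.1) * sbY₂ r s t u ^ p.2) ∧
    ∀ p q : ℤ × ℤ,
      sbX₂ r s t u ^ (2 * (p + q).1) * sbY₂ r s t u ^ (p + q).2
        = (sbX₂ r s t u ^ (2 * p.1) * sbY₂ r s t u ^ p.2)
            * (sbX₂ r s t u ^ (2 * q.1) * sbY₂ r s t u ^ q.2) := by
  have h1 : SemiBundleAux.dt r s t u * SemiBundleAux.dt r s t u = 1 := by
    have hd : SemiBundleAux.dt r s t u = ((r * u - s * t : ℤ) : ℚ) := by push_cast; ring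
    rcases hdet with h | h <;> rw [hd, h] <;> norm_num
  set f : Fin 4 → SemiBundleAux.M3ˣ :=
    ![SemiBundleAux.mX₁ r s t u h1, SemiBundleAux.tr s u, SemiBundleAux.mX₂,
      SemiBundleAux.tr 0 1] with hf
  have hf0 : f 0 = SemiBundleAux.mX₁ r s t u h1 := rfl
  have hf1 : f 1 = SemiBundleAux.tr s u := rfl
  have hf2 : f 2 = SemiBundleAux.mX₂ := rfl
  have hf3 : f 3 = SemiBundleAux.tr 0 1 := rfl
  have hrels : ∀ w ∈ semiBundleRels r s t u, FreeGroup.lift f w = 1 := by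
    intro w hw
    simp only [semiBundleRels, Set.mem_insert_iff, Set.mem_singleton_iff] at hw
    rcases hw with h | h | h | h <;> subst h <;>
      simp only [map_mul, map_inv, map_zpow, map_pow, FreeGroup.lift_apply_of, hf0, hf1, hf2, hf3]
    · exact SemiBundleAux.rel1 r s t u h1
    · exact SemiBundleAux.rel2
    · rw [SemiBundleAux.mX₂_zpow_two_mul, SemiBundleAux.tr01_zpow, SemiBundleAux.tr_mul,
        SemiBundleAux.rel3 r s t u h1]
      norm_num
    · rw [SemiBundleAux.mX₂_zpow_two_mul, SemiBundleAux.tr01_zpow, SemiBundleAux.tr_mul]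
      norm_num
  set φ := PresentedGroup.toGroup hrels with hφ
  have hx2 : φ (sbX₂ r s t u) = SemiBundleAux.mX₂ := by
    rw [sbX₂, hφ, PresentedGroup.toGroup.of, hf2]
  have hy2 : φ (sbY₂ r s t u) = SemiBundleAux.tr 0 1 := by
    rw [sbY₂, hφ, PresentedGroup.toGroup.of, hf3]
  have key : ∀ p : ℤ × ℤ, φ (sbX₂ r s t u ^ (2 * p.1) * sbY₂ r s t u ^ p.2)
      = SemiBundleAux.tr p.1 p.2 := by
    intro p
    rw [map_mul, map_zpow, map_zpow, hx2, hy2, SemiBundleAux.mX₂_zpow_two_mul,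
      SemiBundleAux.tr01_zpow, SemiBundleAux.tr_mul]
    norm_num
  constructor
  · intro p q h
    have h' := congrArg φ h
    simp only at h'
    rw [key p, key q] at h'
    have h0 := congrArg (fun w : SemiBundleAux.M3ˣ => ((w : SemiBundleAux.M3) 0 2)) h'
    have h1' := congrArg (fun w : SemiBundleAux.M3ˣ => ((w : SemiBundleAux.M3) 1 2)) h'
    simp only [SemiBundleAux.tr_val] at h0 h1'
    norm_num [Matrix.cons_val_two, Matrix.vecHead, Matrix.vecTail] at h0 h1'
    exact Prod.ext (by exact_mod_cast h0) (by exact_mod_cast h1')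
  · have hmem : (FreeGroup.of 2 * FreeGroup.of 3 * (FreeGroup.of 2)⁻¹ * FreeGroup.of 3 :
        FreeGroup (Fin 4)) ∈ semiBundleRels r s t u := by
      simp [semiBundleRels]
    have hrel : sbX₂ r s t u * sbY₂ r s t u * (sbX₂ r s t u)⁻¹ * sbY₂ r s t u = 1 := by
      have hone : PresentedGroup.mk (semiBundleRels r s t u)
          (FreeGroup.of 2 * FreeGroup.of 3 * (FreeGroup.of 2)⁻¹ * FreeGroup.of 3) = 1 := by
        change QuotientGroup.mk _ = 1
        refine (QuotientGroup.eq_one_iff _).mpr ?_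
        exact Subgroup.subset_normalClosure hmem
      simpa only [map_mul, map_inv, sbX₂, sbY₂, PresentedGroup.of] using hone
    set x := sbX₂ r s t u with hx
    set y := sbY₂ r s t u with hy
    have hxy1 : x * y * x⁻¹ = y⁻¹ := eq_inv_of_mul_eq_one_left hrel
    have h2 : x * y = y⁻¹ * x := by rw [← hxy1]; group
    have h3 : x * y⁻¹ = y * x := by
      have hinv : (x * y * x⁻¹)⁻¹ = y := by rw [hxy1, inv_inv]
      calc x * y⁻¹ = (x * y * x⁻¹)⁻¹ * x := by group
        _ = y * x := by rw [hinv]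
    have hcomm : Commute (x ^ (2 : ℤ)) y := by
      show x ^ (2 : ℤ) * y = y * x ^ (2 : ℤ)
      calc x ^ (2 : ℤ) * y = x * (x * y) := by rw [zpow_two, mul_assoc]
        _ = x * (y⁻¹ * x) := by rw [h2]
        _ = (x * y⁻¹) * x := by group
        _ = (y * x) * x := by rw [h3]
        _ = y * x ^ (2 : ℤ) := by rw [zpow_two, mul_assoc]
    have hc : ∀ a b : ℤ, x ^ (2 * a) * y ^ b = y ^ b * x ^ (2 * a) := by
      intro a b
      have hcz := (hcomm.zpow_zpow a b).eq
      rw [← zpow_mul] at hcz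
      exact hcz
    intro p q
    rw [Prod.fst_add, Prod.snd_add, mul_add, zpow_add, zpow_add]
    rw [show x ^ (2 * p.1) * x ^ (2 * q.1) * (y ^ p.2 * y ^ q.2)
        = x ^ (2 * p.1) * ((x ^ (2 * q.1) * y ^ p.2) * y ^ q.2) by group,
      hc q.1 p.2]
    group
end

section
/- Let r, s, t, u be integers with ru − st = 1 or ru − st = −1 and with s ≠ 0, and let G(r,s,t,u) = ⟨x₁, y₁, x₂, y₂ ∣ x₁y₁x₁⁻¹y₁ = 1, x₂y₂x₂⁻¹y₂ = 1, x₁² = x₂^{2r} y₂^{t}, y₁ = x₂^{2s} y₂^{u}⟩. If k, l ∈ ℤ satisfy y₁^{2k} = y₂^{2l} in G(r,s,t,u), then k = 0 and l = 0. -/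
open Matrix

private abbrev M3 := Matrix (Fin 3) (Fin 3) ℚ

private def trM (p : ℚ × ℚ) : M3 := !![1,0,p.1;0,1,p.2;0,0,1]

private lemma trM_mul (p q : ℚ × ℚ) : trM p * trM q = trM (p + q) := by
  rw [trM, trM, trM, Matrix.mul_fin_three]
  congr 1 <;> simp <;> ring_nf <;> simp

private lemma trM_zero : trM 0 = 1 := by
  rw [trM, Matrix.one_fin_three]; rfl

private def trU (p : ℚ × ℚ) : GL (Fin 3) ℚ :=
  ⟨trM p, trM (-p),
    by rw [trM_mul, add_neg_cancel, trM_zero],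
    by rw [trM_mul, neg_add_cancel, trM_zero]⟩

@[simp] private lemma trU_val (p : ℚ × ℚ) : (trU p : M3) = trM p := rfl

private lemma trU_mul (p q : ℚ × ℚ) : trU p * trU q = trU (p + q) :=
  Units.ext (by simp [trM_mul])

private lemma trU_zero : trU 0 = 1 := Units.ext (by simp [trM_zero])

private def ψ : Multiplicative (ℚ × ℚ) →* GL (Fin 3) ℚ where
  toFun p := trU p.toAdd
  map_one' := trU_zero
  map_mul' _ _ := (trU_mul _ _).symm

private lemma trU_zpow (p : ℚ × ℚ) (n : ℤ) : trU p ^ n = trU (n • p) := by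
  have h1 : trU p = ψ (Multiplicative.ofAdd p) := rfl
  rw [h1, ← map_zpow, ← ofAdd_zsmul]
  rfl

private def mX₂ : M3 := !![1,0,1/2; 0,-1,0; 0,0,1]
private def mX₂' : M3 := !![1,0,-(1/2); 0,-1,0; 0,0,1]

private def uX₂ : GL (Fin 3) ℚ :=
  ⟨mX₂, mX₂',
    by rw [mX₂, mX₂', Matrix.mul_fin_three, Matrix.one_fin_three]; norm_num,
    by rw [mX₂, mX₂', Matrix.mul_fin_three, Matrix.one_fin_three]; norm_num⟩

private lemma uX₂_sq : uX₂ ^ 2 = trU (1, 0) := by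
  apply Units.ext
  rw [Units.val_pow_eq_pow_val, sq]
  show mX₂ * mX₂ = trM (1, 0)
  rw [mX₂, trM, Matrix.mul_fin_three]
  norm_num

private lemma uX₂_conj : uX₂ * trU (0, 1) = trU (0, -1) * uX₂ := by
  apply Units.ext
  show mX₂ * trM (0, 1) = trM (0, -1) * mX₂
  rw [mX₂, trM, trM, Matrix.mul_fin_three, Matrix.mul_fin_three]
  norm_num

section X1
variable (r s t u : ℤ)

private def mX₁ : M3 :=
  !![-(((s:ℚ)*t - r*u)*((s:ℚ)*t+r*u)), ((s:ℚ)*t - r*u)*(2*r*s), (r:ℚ)/2;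
     -(((s:ℚ)*t - r*u)*(2*u*t)), ((s:ℚ)*t - r*u)*((r:ℚ)*u+s*t), (t:ℚ)/2;
     0, 0, 1]

private def mX₁' : M3 :=
  !![-(((s:ℚ)*t - r*u)*((s:ℚ)*t+r*u)), ((s:ℚ)*t - r*u)*(2*r*s), -((r:ℚ)/2);
     -(((s:ℚ)*t - r*u)*(2*u*t)), ((s:ℚ)*t - r*u)*((r:ℚ)*u+s*t), -((t:ℚ)/2);
     0, 0, 1]

variable (hsq : (((s:ℚ)*t - r*u)) * (((s:ℚ)*t - r*u)) = 1)
include hsq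

set_option maxHeartbeats 1000000 in
private lemma mX₁_mul_inv : mX₁ r s t u * mX₁' r s t u = 1 := by
  rw [mX₁, mX₁', Matrix.mul_fin_three, Matrix.one_fin_three]
  ext i j
  fin_cases i <;> fin_cases j <;>
    simp [Matrix.vecHead, Matrix.vecTail] <;>
    first
      | ring1
      | linear_combination ((((s:ℚ)*t - r*u))^2 + 1) * hsq
      | linear_combination (-((((s:ℚ)*t - r*u))^2 + 1)) * hsq
      | linear_combination ((((s:ℚ)*t - r*u))^2 + 1 + (r:ℚ)/2) * hsq
      | linear_combination (-((((s:ℚ)*t - r*u))^2 + 1 + (r:ℚ)/2)) * hsq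
      | linear_combination ((((s:ℚ)*t - r*u))^2 + 1 - (r:ℚ)/2) * hsq
      | linear_combination (-((((s:ℚ)*t - r*u))^2 + 1 - (r:ℚ)/2)) * hsq
      | linear_combination ((((s:ℚ)*t - r*u))^2 + 1 + (t:ℚ)/2) * hsq
      | linear_combination (-((((s:ℚ)*t - r*u))^2 + 1 + (t:ℚ)/2)) * hsq
      | linear_combination ((((s:ℚ)*t - r*u))^2 + 1 - (t:ℚ)/2) * hsq
      | linear_combination (-((((s:ℚ)*t - r*u))^2 + 1 - (t:ℚ)/2)) * hsq
      | linear_combination ((r:ℚ)/2) * hsq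
      | linear_combination (-((r:ℚ)/2)) * hsq
      | linear_combination ((t:ℚ)/2) * hsq
      | linear_combination (-((t:ℚ)/2)) * hsq
      | linear_combination (s:ℚ) * hsq
      | linear_combination (-(s:ℚ)) * hsq
      | linear_combination (u:ℚ) * hsq
      | linear_combination (-(u:ℚ)) * hsq

set_option maxHeartbeats 1000000 in
private lemma mX₁'_mul_inv : mX₁' r s t u * mX₁ r s t u = 1 := by
  rw [mX₁, mX₁', Matrix.mul_fin_three, Matrix.one_fin_three]
  ext i j
  fin_cases i <;> fin_cases j <;>
    simp [Matrix.vecHead, Matrix.vecTail] <;>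
    first
      | ring1
      | linear_combination ((((s:ℚ)*t - r*u))^2 + 1) * hsq
      | linear_combination (-((((s:ℚ)*t - r*u))^2 + 1)) * hsq
      | linear_combination ((((s:ℚ)*t - r*u))^2 + 1 + (r:ℚ)/2) * hsq
      | linear_combination (-((((s:ℚ)*t - r*u))^2 + 1 + (r:ℚ)/2)) * hsq
      | linear_combination ((((s:ℚ)*t - r*u))^2 + 1 - (r:ℚ)/2) * hsq
      | linear_combination (-((((s:ℚ)*t - r*u))^2 + 1 - (r:ℚ)/2)) * hsq
      | linear_combination ((((s:ℚ)*t - r*u))^2 + 1 + (t:ℚ)/2) * hsq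
      | linear_combination (-((((s:ℚ)*t - r*u))^2 + 1 + (t:ℚ)/2)) * hsq
      | linear_combination ((((s:ℚ)*t - r*u))^2 + 1 - (t:ℚ)/2) * hsq
      | linear_combination (-((((s:ℚ)*t - r*u))^2 + 1 - (t:ℚ)/2)) * hsq
      | linear_combination ((r:ℚ)/2) * hsq
      | linear_combination (-((r:ℚ)/2)) * hsq
      | linear_combination ((t:ℚ)/2) * hsq
      | linear_combination (-((t:ℚ)/2)) * hsq
      | linear_combination (s:ℚ) * hsq
      | linear_combination (-(s:ℚ)) * hsq
      | linear_combination (u:ℚ) * hsq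
      | linear_combination (-(u:ℚ)) * hsq

private noncomputable def uX₁ : GL (Fin 3) ℚ :=
  ⟨mX₁ r s t u, mX₁' r s t u, mX₁_mul_inv r s t u hsq, mX₁'_mul_inv r s t u hsq⟩

set_option maxHeartbeats 1000000 in
private lemma uX₁_sq : uX₁ r s t u hsq ^ 2 = trU ((r:ℚ), (t:ℚ)) := by
  apply Units.ext
  rw [Units.val_pow_eq_pow_val, sq]
  show mX₁ r s t u * mX₁ r s t u = trM ((r:ℚ), (t:ℚ))
  rw [mX₁, trM, Matrix.mul_fin_three]
  ext i j
  fin_cases i <;> fin_cases j <;>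
    simp [Matrix.vecHead, Matrix.vecTail] <;>
    first
      | ring1
      | linear_combination ((((s:ℚ)*t - r*u))^2 + 1) * hsq
      | linear_combination (-((((s:ℚ)*t - r*u))^2 + 1)) * hsq
      | linear_combination ((r:ℚ)/2) * hsq
      | linear_combination (-((r:ℚ)/2)) * hsq
      | linear_combination ((t:ℚ)/2) * hsq
      | linear_combination (-((t:ℚ)/2)) * hsq
      | linear_combination ((((s:ℚ)*t - r*u))^2 + 1 + (r:ℚ)/2) * hsq
      | linear_combination (-((((s:ℚ)*t - r*u))^2 + 1 + (r:ℚ)/2)) * hsq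
      | linear_combination ((((s:ℚ)*t - r*u))^2 + 1 - (r:ℚ)/2) * hsq
      | linear_combination (-((((s:ℚ)*t - r*u))^2 + 1 - (r:ℚ)/2)) * hsq
      | linear_combination ((((s:ℚ)*t - r*u))^2 + 1 + (t:ℚ)/2) * hsq
      | linear_combination (-((((s:ℚ)*t - r*u))^2 + 1 + (t:ℚ)/2)) * hsq
      | linear_combination ((((s:ℚ)*t - r*u))^2 + 1 - (t:ℚ)/2) * hsq
      | linear_combination (-((((s:ℚ)*t - r*u))^2 + 1 - (t:ℚ)/2)) * hsq

set_option maxHeartbeats 1000000 in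
private lemma uX₁_conj :
    uX₁ r s t u hsq * trU ((s:ℚ), (u:ℚ)) = trU (-(s:ℚ), -(u:ℚ)) * uX₁ r s t u hsq := by
  apply Units.ext
  show mX₁ r s t u * trM ((s:ℚ), (u:ℚ)) = trM (-(s:ℚ), -(u:ℚ)) * mX₁ r s t u
  rw [mX₁, trM, trM, Matrix.mul_fin_three, Matrix.mul_fin_three]
  ext i j
  fin_cases i <;> fin_cases j <;>
    simp [Matrix.vecHead, Matrix.vecTail] <;>
    first
      | ring1
      | linear_combination (s:ℚ) * hsq
      | linear_combination (-(s:ℚ)) * hsq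
      | linear_combination (u:ℚ) * hsq
      | linear_combination (-(u:ℚ)) * hsq

end X1

section Main
variable (r s t u : ℤ)

variable (hsq : (((s:ℚ)*t - r*u)) * (((s:ℚ)*t - r*u)) = 1)

private noncomputable def sbF : Fin 4 → GL (Fin 3) ℚ :=
  ![uX₁ r s t u hsq, trU ((s:ℚ), (u:ℚ)), uX₂, trU (0, 1)]

include hsq in
private lemma sbF_rels : ∀ w ∈ semiBundleRels r s t u, FreeGroup.lift (sbF r s t u hsq) w = 1 := by
  intro w hw
  have e0 : FreeGroup.lift (sbF r s t u hsq) (FreeGroup.of (0 : Fin 4)) = uX₁ r s t u hsq := by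
    simp [sbF]
  have e1 : FreeGroup.lift (sbF r s t u hsq) (FreeGroup.of (1 : Fin 4)) = trU ((s:ℚ), (u:ℚ)) := by
    simp [sbF]
  have e2 : FreeGroup.lift (sbF r s t u hsq) (FreeGroup.of (2 : Fin 4)) = uX₂ := by
    simp [sbF]
  have e3 : FreeGroup.lift (sbF r s t u hsq) (FreeGroup.of (3 : Fin 4)) = trU (0, 1) := by
    simp [sbF]
  have hx2pow : ∀ n : ℤ, uX₂ ^ (2 * n) = trU ((n : ℚ), 0) := by
    intro n
    rw [_root_.zpow_mul, show ((2:ℤ)) = ((2:ℕ) : ℤ) from rfl, zpow_natCast, uX₂_sq, trU_zpow]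
    congr 1
    simp
  rcases hw with hw | hw | hw | hw
  · -- x₁ y₁ x₁⁻¹ y₁
    subst hw
    simp only [_root_.map_mul, _root_.map_inv, e0, e1]
    have := uX₁_conj r s t u hsq
    calc uX₁ r s t u hsq * trU ((s:ℚ), (u:ℚ)) * (uX₁ r s t u hsq)⁻¹ * trU ((s:ℚ), (u:ℚ))
        = trU (-(s:ℚ), -(u:ℚ)) * uX₁ r s t u hsq * (uX₁ r s t u hsq)⁻¹ * trU ((s:ℚ), (u:ℚ)) := by
          rw [this]
      _ = trU (-(s:ℚ), -(u:ℚ)) * trU ((s:ℚ), (u:ℚ)) := by group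
      _ = 1 := by rw [trU_mul]; rw [show ((-(s:ℚ), -(u:ℚ)) + ((s:ℚ), (u:ℚ))) = 0 by simp]; exact trU_zero
  · -- x₂ y₂ x₂⁻¹ y₂
    subst hw
    simp only [_root_.map_mul, _root_.map_inv, e2, e3]
    calc uX₂ * trU (0, 1) * uX₂⁻¹ * trU (0, 1)
        = trU (0, -1) * uX₂ * uX₂⁻¹ * trU (0, 1) := by rw [uX₂_conj]
      _ = trU (0, -1) * trU (0, 1) := by group
      _ = 1 := by rw [trU_mul]; rw [show (((0:ℚ), (-1:ℚ)) + ((0:ℚ), (1:ℚ))) = 0 by simp]; exact trU_zero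
  · -- x₁² = x₂^{2r} y₂^t
    subst hw
    simp only [_root_.map_mul, _root_.map_inv, map_pow, map_zpow, e0, e2, e3]
    rw [hx2pow r, trU_zpow, uX₁_sq]
    rw [show (t • ((0:ℚ), (1:ℚ))) = ((0:ℚ), (t:ℚ)) by simp, trU_mul,
      show (((r:ℚ), (0:ℚ)) + ((0:ℚ), (t:ℚ))) = ((r:ℚ), (t:ℚ)) by simp]
    exact mul_inv_cancel _
  · -- y₁ = x₂^{2s} y₂^u
    subst hw
    simp only [_root_.map_mul, _root_.map_inv, map_zpow, e1, e2, e3]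
    rw [hx2pow s, trU_zpow]
    rw [show (u • ((0:ℚ), (1:ℚ))) = ((0:ℚ), (u:ℚ)) by simp, trU_mul,
      show (((s:ℚ), (0:ℚ)) + ((0:ℚ), (u:ℚ))) = ((s:ℚ), (u:ℚ)) by simp]
    exact mul_inv_cancel _

end Main

/-- If `s ≠ 0` (so the torus semi-bundle carries a Sol structure), then
`y₁^{2k} = y₂^{2l}` in `G(r,s,t,u)` forces `k = 0` and `l = 0`. -/
theorem semiBundle_y_powers (r s t u : ℤ)
    (hdet : r * u - s * t = 1 ∨ r * u - s * t = -1) (hs : s ≠ 0)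
    (k l : ℤ) (h : sbY₁ r s t u ^ (2 * k) = sbY₂ r s t u ^ (2 * l)) :
    k = 0 ∧ l = 0 := by
  have hsq : (((s:ℚ)*t - r*u)) * (((s:ℚ)*t - r*u)) = 1 := by
    rcases hdet with hd | hd
    · have hd' : ((r:ℚ)*u - s*t) = 1 := by exact_mod_cast hd
      linear_combination ((r:ℚ)*u - s*t + 1) * hd'
    · have hd' : ((r:ℚ)*u - s*t) = -1 := by exact_mod_cast hd
      linear_combination ((r:ℚ)*u - s*t - 1) * hd'
  set φ := PresentedGroup.toGroup (sbF_rels r s t u hsq) with hφ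
  have h1 : φ (sbY₁ r s t u) = trU ((s:ℚ), (u:ℚ)) := by
    rw [hφ, sbY₁, PresentedGroup.toGroup.of]
    simp [sbF]
  have h2 : φ (sbY₂ r s t u) = trU (0, 1) := by
    rw [hφ, sbY₂, PresentedGroup.toGroup.of]
    simp [sbF]
  have key := congrArg φ h
  rw [map_zpow, map_zpow, h1, h2, trU_zpow, trU_zpow] at key
  have hm : trM ((2*k) • ((s:ℚ), (u:ℚ))) = trM ((2*l) • ((0:ℚ), (1:ℚ))) :=
    congrArg Units.val key
  have h02 := congrFun (congrFun hm 0) 2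
  have h12 := congrFun (congrFun hm 1) 2
  simp [trM, zsmul_eq_mul] at h02 h12
  have hk : k = 0 := h02.resolve_right hs
  refine ⟨hk, ?_⟩
  subst hk
  simp at h12
  omega
end

section
/- Let g ≥ 2 and let S_g = ⟨a₁, b₁, …, a_g, b_g ∣ [a₁,b₁][a₂,b₂]⋯[a_g,b_g] = 1⟩ be the fundamental group of the closed orientable surface of genus g. Then the second derived subgroup of S_g (the commutator subgroup of the commutator subgroup of S_g) is nontrivial; equivalently, S_g is not metabelian, so the quotient map from S_g to its metabelianization S_g/S_g'' is not injective. -/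
open scoped commutatorElement

/-- The single relator `[a₁,b₁][a₂,b₂]⋯[a_g,b_g]` of the fundamental group of the
closed orientable surface of genus `g`; here `Sum.inl i` is the generator `aᵢ` and
`Sum.inr i` is the generator `bᵢ`. -/
def orientableSurfaceRels (g : ℕ) : Set (FreeGroup (Fin g ⊕ Fin g)) :=
  {(List.ofFn fun i : Fin g =>
      ⁅(FreeGroup.of (Sum.inl i) : FreeGroup (Fin g ⊕ Fin g)),
        FreeGroup.of (Sum.inr i)⁆).prod}

/-- The fundamental group `S_g = ⟨a₁, b₁, …, a_g, b_g ∣ [a₁,b₁]⋯[a_g,b_g] = 1⟩` of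
the closed orientable surface of genus `g`. -/
abbrev OrientableSurfaceGroup (g : ℕ) : Type :=
  PresentedGroup (orientableSurfaceRels g)

set_option maxRecDepth 10000 in
/-- For `g ≥ 2`, the second derived subgroup of the genus-`g` surface group is
nontrivial; equivalently `S_g` is not metabelian, so the quotient map onto the
metabelianization `S_g/S_g''` is not injective. -/
theorem surface_group_not_metabelian (g : ℕ) (hg : 2 ≤ g) :
    derivedSeries (OrientableSurfaceGroup g) 2 ≠ ⊥ := by
  intro h
  -- the target map on generators
  set x : Equiv.Perm (Fin 4) := Equiv.swap 0 1 with hx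
  set y : Equiv.Perm (Fin 4) := finRotate 4 with hy
  set F : Fin g ⊕ Fin g → Equiv.Perm (Fin 4) :=
    Sum.elim (fun i => if (i : ℕ) = 0 then x else if (i : ℕ) = 1 then y else 1)
      (fun _ => 1) with hF
  have hrel : ∀ r ∈ orientableSurfaceRels g, FreeGroup.lift F r = 1 := by
    intro r hr
    rw [orientableSurfaceRels, Set.mem_singleton_iff] at hr
    subst hr
    rw [map_list_prod]
    apply List.prod_eq_one
    intro z hz
    simp only [List.map_ofFn, List.mem_ofFn] at hz
    obtain ⟨i, rfl⟩ := hz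
    simp [hF, commutatorElement_def]
  set f : OrientableSurfaceGroup g →* Equiv.Perm (Fin 4) := PresentedGroup.toGroup hrel with hf
  -- metabelian: commutators of commutators vanish
  have key : ∀ a b c d : OrientableSurfaceGroup g, ⁅⁅a, b⁆, ⁅c, d⁆⁆ = 1 := by
    intro a b c d
    have mem1 : ∀ u v : OrientableSurfaceGroup g,
        ⁅u, v⁆ ∈ derivedSeries (OrientableSurfaceGroup g) 1 := by
      intro u v
      rw [derivedSeries_one]
      exact Subgroup.commutator_mem_commutator (Subgroup.mem_top u) (Subgroup.mem_top v)
    have : ⁅⁅a, b⁆, ⁅c, d⁆⁆ ∈ derivedSeries (OrientableSurfaceGroup g) 2 := by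
      rw [derivedSeries_succ]
      exact Subgroup.commutator_mem_commutator (mem1 a b) (mem1 c d)
    rw [h, Subgroup.mem_bot] at this
    exact this
  -- apply f to a specific instance
  set a : OrientableSurfaceGroup g := PresentedGroup.of (Sum.inl ⟨0, by omega⟩) with ha
  set b : OrientableSurfaceGroup g := PresentedGroup.of (Sum.inl ⟨1, by omega⟩) with hb
  have hfa : f a = x := by
    rw [ha, hf, PresentedGroup.toGroup.of]; simp [hF]
  have hfb : f b = y := by
    rw [hb, hf, PresentedGroup.toGroup.of]; simp [hF]
  have := congrArg f (key a b (a * b) (b * a))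
  rw [map_commutatorElement, map_commutatorElement, map_commutatorElement, map_mul, map_mul,
    map_one, hfa, hfb] at this
  revert this
  rw [hx, hy]
  decide
end
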